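/- Let S_M > S* > 0 and I₂ > Ī* > 0, and suppose S_M − S* − S* ln(S_M/S*) = I₂ − Ī* − Ī* ln(I₂/Ī*) + (1/β)∫_{Ī*}^{I₂}(v̄(i) − v̄(Ī*))/i di with v̄ increasing. Then (S_M − S*)²/S_M ≥ (I₂ − Ī*)²/(2I₂), and hence S_M − S* ≥ √(S_M/(2I₂)) (I₂ − Ī*). -/

import Mathlib

open intervalIntegral

lemma aux_upper (a b : ℝ) (ha : 0 < a) (hab : a < b) :
    b - a - a * Real.log (b / a) ≤ (b - a)^2 / b := by
  have hb : 0 < b := ha.trans hab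
  have h1 : Real.log (a / b) ≤ a / b - 1 :=
    Real.log_le_sub_one_of_pos (by positivity)
  have h2 : Real.log (a / b) = - Real.log (b / a) := by
    rw [Real.log_div ha.ne' hb.ne', Real.log_div hb.ne' ha.ne']; ring
  have h3 : 1 - a / b ≤ Real.log (b / a) := by linarith [h2 ▸ h1]
  rw [le_div_iff₀ hb]
  have h4 := mul_le_mul_of_nonneg_left h3 (by positivity : (0:ℝ) ≤ a * b)
  have hfs : a * b * (1 - a / b) = a * b - a * a := by field_simp
  nlinarith [h4, hfs]

lemma aux_lower (a b : ℝ) (ha : 0 < a) (hab : a < b) :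
    (b - a)^2 / (2 * b) ≤ b - a - a * Real.log (b / a) := by
  have hb : 0 < b := ha.trans hab
  set u := Real.sqrt (b / a) with hu
  have hu0 : 0 < u := Real.sqrt_pos.mpr (by positivity)
  have hu1 : 1 ≤ u := Real.one_le_sqrt.mpr ((one_le_div ha).mpr hab.le)
  have hu2 : u ^ 2 = b / a := Real.sq_sqrt (by positivity : (0:ℝ) ≤ b / a)
  have hlog : Real.log (b / a) = 2 * Real.log u := by
    rw [← hu2, Real.log_pow]; push_cast; ring
  have hsinh : Real.log u ≤ Real.sinh (Real.log u) :=
    Real.self_le_sinh_iff.mpr (Real.log_nonneg hu1)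
  have hsinh' : Real.sinh (Real.log u) = (u - u⁻¹) / 2 := by
    rw [Real.sinh_eq, Real.exp_log hu0, Real.exp_neg, Real.exp_log hu0]
  have hlogle : Real.log (b / a) ≤ u - u⁻¹ := by
    rw [hlog]; rw [hsinh'] at hsinh; linarith
  have hbu : b = a * u ^ 2 := by rw [hu2, mul_div_assoc', mul_div_cancel_left₀ _ ha.ne']
  have key : a * (u - u⁻¹) = (b - a) / u := by
    rw [hbu]; field_simp
  have hsq : (2 * b)^2 ≤ (u * (a + b))^2 := by
    have h5 : (u * (a + b))^2 = u^2 * (a + b)^2 := by ring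
    rw [h5, hu2, div_mul_eq_mul_div, le_div_iff₀ ha]
    nlinarith [sq_nonneg (a - b)]
  have hule : 2 * b ≤ u * (a + b) := by
    have := Real.sqrt_le_sqrt hsq
    rwa [Real.sqrt_sq (by positivity), Real.sqrt_sq (by positivity)] at this
  have hba : 0 < b - a := by linarith
  have step : (b - a) / u ≤ (b - a) * (a + b) / (2 * b) := by
    rw [div_le_div_iff₀ hu0 (by positivity)]
    nlinarith [mul_le_mul_of_nonneg_left hule hba.le]
  have halog : a * Real.log (b / a) ≤ (b - a) * (a + b) / (2 * b) := by
    calc a * Real.log (b / a) ≤ a * (u - u⁻¹) :=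
          mul_le_mul_of_nonneg_left hlogle ha.le
      _ = (b - a) / u := key
      _ ≤ (b - a) * (a + b) / (2 * b) := step
  have expand : b - a - (b - a) * (a + b) / (2 * b) = (b - a)^2 / (2 * b) := by
    field_simp; ring
  linarith [expand]

/-- Estimate relating the height S_M of the Lyapunov level line through its top
    point (Ī*, S_M) to the horizontal distance I₂ − Ī*:
    (S_M − S*)²/S_M ≥ (I₂ − Ī*)²/(2I₂), hence S_M − S* ≥ √(S_M/(2I₂))(I₂ − Ī*). -/
theorem level_line_estimate_upper
    (β Sstar SM I₂ Ibar : ℝ)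
    (vbar : ℝ → ℝ)
    (hβ : 0 < β)
    (hSstar : 0 < Sstar) (hSM : Sstar < SM)
    (hIbar : 0 < Ibar) (hIord : Ibar < I₂)
    (hmono : MonotoneOn vbar (Set.Icc Ibar I₂))
    (heq : SM - Sstar - Sstar * Real.log (SM / Sstar)
      = I₂ - Ibar - Ibar * Real.log (I₂ / Ibar)
        + (1/β) * ∫ i in Ibar..I₂, (vbar i - vbar Ibar) / i) :
    (SM - Sstar)^2 / SM ≥ (I₂ - Ibar)^2 / (2 * I₂) ∧
    SM - Sstar ≥ Real.sqrt (SM / (2 * I₂)) * (I₂ - Ibar) := by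
  have hSM0 : 0 < SM := hSstar.trans hSM
  have hI₂ : 0 < I₂ := hIbar.trans hIord
  have hint : 0 ≤ ∫ i in Ibar..I₂, (vbar i - vbar Ibar) / i := by
    apply intervalIntegral.integral_nonneg hIord.le
    intro u hu
    have h1 : vbar Ibar ≤ vbar u :=
      hmono (Set.left_mem_Icc.mpr hIord.le) hu hu.1
    have h2 : 0 < u := lt_of_lt_of_le hIbar hu.1
    exact div_nonneg (by linarith) h2.le
  have h1 := aux_upper Sstar SM hSstar hSM
  have h2 := aux_lower Ibar I₂ hIbar hIord
  have hmain : (I₂ - Ibar)^2 / (2 * I₂) ≤ (SM - Sstar)^2 / SM := by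
    have hβ' : 0 ≤ (1/β) * ∫ i in Ibar..I₂, (vbar i - vbar Ibar) / i := by
      apply mul_nonneg (one_div_nonneg.mpr hβ.le) hint
    linarith
  refine ⟨hmain, ?_⟩
  have hrw : Real.sqrt (SM / (2 * I₂)) * (I₂ - Ibar)
      = Real.sqrt (SM / (2 * I₂) * (I₂ - Ibar)^2) := by
    rw [Real.sqrt_mul (by positivity), Real.sqrt_sq (by linarith)]
  rw [ge_iff_le, hrw]
  have : SM / (2 * I₂) * (I₂ - Ibar)^2 ≤ (SM - Sstar)^2 := by
    rw [div_le_div_iff₀ (by positivity) hSM0] at hmain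
    rw [div_mul_eq_mul_div, div_le_iff₀ (by positivity)]
    nlinarith
  calc Real.sqrt (SM / (2 * I₂) * (I₂ - Ibar)^2)
      ≤ Real.sqrt ((SM - Sstar)^2) := Real.sqrt_le_sqrt this
    _ = SM - Sstar := Real.sqrt_sq (by linarith)
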